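/- Let G be a finite simple graph such that every nonempty induced subgraph of G contains a strong stable set. Then the chromatic number of G equals its clique number: iteratively choosing a strong stable set S_1 of G, a strong stable set S_2 of G minus S_1, and so on until no vertices remain, yields a proper coloring S_1, …, S_ℓ of G whose number of colors ℓ equals the size of some clique of G. -/

import Mathlib

open SimpleGraph

/-- A stable (independent) set: a set of pairwise nonadjacent vertices. -/
def SimpleGraph.IsStableSet {V : Type*} (G : SimpleGraph V) (S : Set V) : Prop :=
  S.Pairwise fun a b => ¬ G.Adj a b

/-- A strong stable set: a stable set meeting every inclusion-maximal clique. -/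
def SimpleGraph.IsStrongStableSet {V : Type*} (G : SimpleGraph V) (S : Set V) : Prop :=
  G.IsStableSet S ∧
    ∀ Q : Set V, G.IsClique Q → (∀ Q' : Set V, G.IsClique Q' → Q ⊆ Q' → Q' = Q) →
      (S ∩ Q).Nonempty

/-- Any clique in a graph on a finite type extends to an inclusion-maximal clique. -/
lemma exists_maximal_clique {W : Type*} [Finite W] (G : SimpleGraph W) (Q : Set W)
    (hQ : G.IsClique Q) :
    ∃ M, G.IsClique M ∧ Q ⊆ M ∧ ∀ Q', G.IsClique Q' → M ⊆ Q' → Q' = M := by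
  obtain ⟨M, hM, hmax⟩ := Set.Finite.exists_maximalFor id {M | G.IsClique M ∧ Q ⊆ M}
    (Set.toFinite _) ⟨Q, hQ, subset_rfl⟩
  exact ⟨M, hM.1, hM.2, fun Q' hQ' hsub => Set.Subset.antisymm (hmax (j := Q') ⟨hQ', hM.2.trans hsub⟩ hsub) hsub⟩

lemma key_induction {V : Type*} [Fintype V] (G : SimpleGraph V)
    (h : ∀ s : Set V, s.Nonempty → ∃ S : Set s, (G.induce s).IsStrongStableSet S) :
    ∀ (n : ℕ) (s : Set V), s.ncard ≤ n →
      ∃ (ℓ : ℕ) (f : V → ℕ), (∀ a ∈ s, f a < ℓ) ∧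
        (∀ a ∈ s, ∀ b ∈ s, G.Adj a b → f a ≠ f b) ∧
        ∃ Q : Finset V, ↑Q ⊆ s ∧ Q.card = ℓ ∧ G.IsClique (Q : Set V) := by
  classical
  intro n
  induction n with
  | zero =>
    intro s hs
    have hse : s = ∅ := by
      have := Nat.le_zero.mp hs
      rwa [Set.ncard_eq_zero s.toFinite] at this
    subst hse
    exact ⟨0, fun _ => 0, by simp, by simp, ∅, by simp, by simp, by simp⟩
  | succ n ih =>
    intro s hs
    rcases s.eq_empty_or_nonempty with rfl | hsne
    · exact ⟨0, fun _ => 0, by simp, by simp, ∅, by simp, by simp, by simp⟩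
    obtain ⟨S, hSstable, hSmeet⟩ := h s hsne
    -- S is nonempty
    obtain ⟨v, hv⟩ := hsne
    have hone : (G.induce s).IsClique {(⟨v, hv⟩ : s)} := by simp
    obtain ⟨M₀, hM₀c, _, hM₀max⟩ := exists_maximal_clique (G.induce s) _ hone
    obtain ⟨x, hxS, _⟩ := hSmeet M₀ hM₀c hM₀max
    -- the set of values of S
    set T : Set V := Subtype.val '' S with hT
    have hTs : T ⊆ s := by rintro a ⟨b, _, rfl⟩; exact b.2
    have hxT : (x : V) ∈ T := ⟨x, hxS, rfl⟩
    set s' : Set V := s \ T with hs'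
    have hs'card : s'.ncard ≤ n := by
      have hlt : s'.ncard < s.ncard :=
        Set.ncard_lt_ncard ⟨Set.diff_subset, fun hsub => (hsub x.2).2 hxT⟩ s.toFinite
      omega
    obtain ⟨ℓ, f, hflt, hfprop, Q, hQs', hQcard, hQclique⟩ := ih s' hs'card
    refine ⟨ℓ + 1, fun v => if v ∈ T then ℓ else f v, ?_, ?_, ?_⟩
    · intro a ha
      by_cases haT : a ∈ T
      · simp [haT]
      · simp only [haT, if_false]
        exact Nat.lt_succ_of_lt (hflt a ⟨ha, haT⟩)
    · intro a ha b hb hab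
      by_cases haT : a ∈ T <;> by_cases hbT : b ∈ T
      · exfalso
        obtain ⟨a', ha'S, rfl⟩ := haT
        obtain ⟨b', hb'S, rfl⟩ := hbT
        have hne : a' ≠ b' := fun e => (G.ne_of_adj hab) (by rw [e])
        exact hSstable ha'S hb'S hne hab
      · have : f b < ℓ := hflt b ⟨hb, hbT⟩
        simp only [haT, hbT, if_true, if_false]
        omega
      · have : f a < ℓ := hflt a ⟨ha, haT⟩
        simp only [haT, hbT, if_true, if_false]
        omega
      · simp only [haT, hbT, if_false]
        exact hfprop a ⟨ha, haT⟩ b ⟨hb, hbT⟩ hab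
    · -- build the clique of size ℓ + 1
      have hQs : (Q : Set V) ⊆ s := fun a ha => (hQs' ha).1
      -- lift Q to a clique in the induced graph
      set Qhat : Set s := Subtype.val ⁻¹' (Q : Set V) with hQhat
      have hQhatc : (G.induce s).IsClique Qhat := by
        intro a ha b hb hne
        exact hQclique ha hb (fun e => hne (Subtype.ext e))
      obtain ⟨M, hMc, hQM, hMmax⟩ := exists_maximal_clique (G.induce s) Qhat hQhatc
      obtain ⟨y, hyS, hyM⟩ := hSmeet M hMc hMmax
      have hyT : (y : V) ∈ T := ⟨y, hyS, rfl⟩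
      have hyQ : (y : V) ∉ Q := fun hyQ => (hQs' hyQ).2 hyT
      refine ⟨insert (y : V) Q, ?_, ?_, ?_⟩
      · intro a ha
        simp only [Finset.coe_insert, Set.mem_insert_iff] at ha
        rcases ha with rfl | ha
        · exact y.2
        · exact hQs ha
      · rw [Finset.card_insert_of_notMem hyQ, hQcard]
      · have himg : G.IsClique (Subtype.val '' M) := by
          rintro _ ⟨a, haM, rfl⟩ _ ⟨b, hbM, rfl⟩ hne
          exact hMc haM hbM (fun e => hne (by rw [e]))
        apply himg.subset
        intro a ha
        simp only [Finset.coe_insert, Set.mem_insert_iff] at ha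
        rcases ha with rfl | ha
        · exact ⟨y, hyM, rfl⟩
        · exact ⟨⟨a, hQs ha⟩, hQM ha, rfl⟩

/-- If every nonempty induced subgraph of `G` contains a strong stable set, then the
chromatic number of `G` equals its clique number: there is a proper coloring of `G`
with `ℓ` colors and a clique of `G` of size `ℓ`. -/
theorem chromaticNumber_eq_cliqueNum_of_strongStableSets {V : Type*} [Fintype V]
    (G : SimpleGraph V)
    (h : ∀ s : Set V, s.Nonempty → ∃ S : Set s, (G.induce s).IsStrongStableSet S) :
    G.chromaticNumber = G.cliqueNum ∧
      ∃ (ℓ : ℕ) (_ : G.Coloring (Fin ℓ)) (Q : Finset V), G.IsNClique ℓ Q := by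
  obtain ⟨ℓ, f, hflt, hfprop, Q, -, hQcard, hQclique⟩ :=
    key_induction G h (Set.univ : Set V).ncard Set.univ le_rfl
  have C : G.Coloring (Fin ℓ) :=
    Coloring.mk (fun v => ⟨f v, hflt v trivial⟩)
      (fun {a b} hab heq => hfprop a trivial b trivial hab (congrArg Fin.val heq))
  have hclique : G.IsNClique ℓ Q := ⟨hQclique, hQcard⟩
  refine ⟨le_antisymm ?_ ?_, ℓ, C, Q, hclique⟩
  · -- χ ≤ ω : χ ≤ ℓ ≤ ω
    calc G.chromaticNumber ≤ (Fintype.card (Fin ℓ) : ℕ∞) := C.colorable.chromaticNumber_le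
      _ = (ℓ : ℕ∞) := by simp
      _ ≤ (G.cliqueNum : ℕ∞) := by
          exact_mod_cast hQcard ▸ (hQclique.card_le_cliqueNum)
  · -- ω ≤ χ
    obtain ⟨t, htc, htcard⟩ := G.exists_isNClique_cliqueNum
    calc (G.cliqueNum : ℕ∞) = (t.card : ℕ∞) := by rw [htcard]
      _ ≤ G.chromaticNumber := htc.card_le_chromaticNumber
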